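/- The Poincaré-patch bracket on generators, {ŵ^p_{m,a}, ŵ^q_{n,b}}^P = ((p+m-1)(q-b-2)-(q+n-1)(p-a-2)) ŵ^{p+q-3/2}_{m+n-1/2, a+b-1/2} + ((p-m-1)(q+b-2)-(q-n-1)(p+a-2)) ŵ^{p+q-3/2}_{m+n+1/2, a+b+1/2}, satisfies antisymmetry and the Jacobi identity. -/

import Mathlib

/-- Index set for the generators `ŵ^p_{m,a}`: triples `(p, m, a)` of rationals. -/
abbrev Idx : Type := ℚ × ℚ × ℚ

/-- The Poincaré-patch bracket of two basis generators:
`{ŵ^p_{m,a}, ŵ^q_{n,b}}^P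
  = ((p+m-1)(q-b-2)-(q+n-1)(p-a-2)) ŵ^{p+q-3/2}_{m+n-1/2, a+b-1/2}
  + ((p-m-1)(q+b-2)-(q-n-1)(p+a-2)) ŵ^{p+q-3/2}_{m+n+1/2, a+b+1/2}`. -/
noncomputable def wbrP {K : Type*} [Field K] [CharZero K] (i j : Idx) : Idx →₀ K :=
  (((i.1 + i.2.1 - 1) * (j.1 - j.2.2 - 2) - (j.1 + j.2.1 - 1) * (i.1 - i.2.2 - 2) : ℚ) : K) •
      Finsupp.single (i.1 + j.1 - 3/2, i.2.1 + j.2.1 - 1/2, i.2.2 + j.2.2 - 1/2) (1 : K)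
    + (((i.1 - i.2.1 - 1) * (j.1 + j.2.2 - 2) - (j.1 - j.2.1 - 1) * (i.1 + i.2.2 - 2) : ℚ) : K) •
      Finsupp.single (i.1 + j.1 - 3/2, i.2.1 + j.2.1 + 1/2, i.2.2 + j.2.2 + 1/2) (1 : K)

/-- Bilinear extension of the bracket to the free module on the generators. -/
noncomputable def brP {K : Type*} [Field K] [CharZero K] (f g : Idx →₀ K) : Idx →₀ K :=
  f.sum fun i x => g.sum fun j y => (x * y) • wbrP i j

/-- Antisymmetry of the bracket on generators. -/
lemma wbrP_anti {K : Type*} [Field K] [CharZero K] (i j : Idx) :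
    wbrP (K := K) i j = - wbrP j i := by
  simp only [wbrP]
  rw [add_comm j.1 i.1, add_comm j.2.1 i.2.1, add_comm j.2.2 i.2.2]
  push_cast
  module

/-- Antisymmetry of the bilinearly extended bracket. -/
lemma brP_anti {K : Type*} [Field K] [CharZero K] (f g : Idx →₀ K) :
    brP f g = - brP g f := by
  rw [eq_neg_iff_add_eq_zero, brP, brP, Finsupp.sum_comm f, ← Finsupp.sum_add]
  rw [show (0 : Idx →₀ K) = g.sum fun _ _ => 0 from Finsupp.sum_fun_zero _ |>.symm]
  apply Finsupp.sum_congr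
  intro j _
  rw [← Finsupp.sum_add,
    show (0 : Idx →₀ K) = f.sum fun _ _ => 0 from Finsupp.sum_fun_zero _ |>.symm]
  apply Finsupp.sum_congr
  intro i _
  rw [wbrP_anti i j, mul_comm]
  simp

/-- The bracket of a generator with a combination of two (scaled) generators. -/
lemma brP_single_combo {K : Type*} [Field K] [CharZero K] (i u v : Idx) (c d : K) :
    brP (Finsupp.single i (1:K)) (c • Finsupp.single u 1 + d • Finsupp.single v (1:K))
      = c • wbrP i u + d • wbrP i v := by
  rw [brP, Finsupp.sum_single_index (by simp)]
  rw [Finsupp.smul_single, Finsupp.smul_single, smul_eq_mul, smul_eq_mul, mul_one, mul_one]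
  rw [Finsupp.sum_add_index (by simp) (by intros; rw [mul_add, add_smul])]
  rw [Finsupp.sum_single_index (by simp), Finsupp.sum_single_index (by simp), one_mul, one_mul]

/-- On generators, the extended bracket agrees with `wbrP`. -/
lemma brP_single_single {K : Type*} [Field K] [CharZero K] (i j : Idx) :
    brP (Finsupp.single i (1:K)) (Finsupp.single j 1) = wbrP i j := by
  rw [brP, Finsupp.sum_single_index (by simp), Finsupp.sum_single_index (by simp), one_mul,
    one_smul]

/-- The Poincaré-patch celestial chiral bracket is antisymmetric and satisfies
the Jacobi identity. -/
theorem poincare_bracket_lie {K : Type*} [Field K] [CharZero K] :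
    (∀ f g : Idx →₀ K, brP f g = - brP g f) ∧
    (∀ i j k : Idx,
      brP (Finsupp.single i (1 : K)) (brP (Finsupp.single j 1) (Finsupp.single k 1))
      + brP (Finsupp.single j 1) (brP (Finsupp.single k 1) (Finsupp.single i 1))
      + brP (Finsupp.single k 1) (brP (Finsupp.single i 1) (Finsupp.single j 1)) = 0) := by
  refine ⟨brP_anti, ?_⟩
  intro i j k
  obtain ⟨p, m, a⟩ := i
  obtain ⟨q, n, b⟩ := j
  obtain ⟨r, l, c⟩ := k
  rw [brP_single_single, brP_single_single, brP_single_single]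
  simp only [wbrP]
  rw [brP_single_combo, brP_single_combo, brP_single_combo]
  simp only [wbrP]
  push_cast
  ring_nf
  module
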